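/- For every integer n ≥ 1, V_n = (A_L − K B_R)(V_{n−1}) + (B_L − K⁻¹ A_R)(V_{n−1}) (sum of subspaces). -/

import Mathlib

noncomputable section
namespace SqPaper

/-- The two letters: `0 ↦ A`, `1 ↦ B`. -/
abbrev Ltr := Fin 2
def lA : Ltr := 0
def lB : Ltr := 1

/-- The pairing `⟨ , ⟩` on letters: `⟨A,A⟩=⟨B,B⟩=2`, `⟨A,B⟩=⟨B,A⟩=-2`. -/
def brk (x y : Ltr) : ℤ := if x = y then 2 else -2

variable (F : Type*) [Field F]

/-- The free algebra `V` on the two generators, realized as the monoid algebra of the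
free monoid on two letters; the words form the standard basis. -/
abbrev FA := MonoidAlgebra F (FreeMonoid Ltr)

/-- The standard basis vector attached to a word (list of letters). -/
def wd (l : List Ltr) : FA F := MonoidAlgebra.single (FreeMonoid.ofList l) 1

def Agen : FA F := wd F [lA]
def Bgen : FA F := wd F [lB]

/-- View an element of `V` as a finitely supported function on words. -/
def fsp (v : FA F) : FreeMonoid Ltr →₀ F := v.coeff

/-- The symmetric bilinear form on `V` for which the standard basis of words is orthonormal. -/
def form (u v : FA F) : F := (fsp F u).sum fun w c => c * (fsp F v) w

/-- Extend a function on words to an `F`-linear map on `V`. -/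
def mkMap {M : Type*} [AddCommMonoid M] [Module F M] (f : List Ltr → M) :
    FA F →ₗ[F] M :=
  Finsupp.lsum F (fun w => LinearMap.toSpanSingleton F M (f (FreeMonoid.toList w)))
    ∘ₗ (MonoidAlgebra.coeffLinearEquiv F).toLinearMap

/-- `[3]_q = (q³ - q⁻³)/(q - q⁻¹)`. -/
def tri (q : F) : F := (q ^ 3 - q⁻¹ ^ 3) / (q - q⁻¹)

/-- The q-shuffle product on words. -/
def shufW (q : F) : List Ltr → List Ltr → FA F
  | [], v => wd F v
  | u, [] => wd F u
  | a :: u, b :: v =>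
      wd F [a] * shufW q u (b :: v) +
        (q ^ (((a :: u).map (fun x => brk x b)).sum)) • (wd F [b] * shufW q (a :: u) v)
  termination_by u v => u.length + v.length

/-- The q-shuffle product `⋆` on `V`, as a bilinear map. -/
def qshuf (q : F) : FA F →ₗ[F] FA F →ₗ[F] FA F :=
  mkMap F fun u => mkMap F fun v => shufW F q u v

/-- Iterated `⋆`-product of the letters of a word. -/
def thetaW (q : F) : List Ltr → FA F
  | [] => 1
  | a :: t => qshuf F q (wd F [a]) (thetaW q t)

/-- `θ : V → V`, the algebra homomorphism from the free algebra to the q-shuffle algebra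
with `θ(A) = A`, `θ(B) = B`. -/
def theta (q : F) : FA F →ₗ[F] FA F := mkMap F fun l => thetaW F q l

/-- `A_L`, left multiplication by `A` in the free algebra. -/
def AL : FA F →ₗ[F] FA F := LinearMap.mulLeft F (Agen F)
def BL : FA F →ₗ[F] FA F := LinearMap.mulLeft F (Bgen F)
def AR : FA F →ₗ[F] FA F := LinearMap.mulRight F (Agen F)
def BR : FA F →ₗ[F] FA F := LinearMap.mulRight F (Bgen F)

/-- `X*_L` (for the letter `x`): deletes the letter `x` from the front of a word. -/
def delL (x : Ltr) : FA F →ₗ[F] FA F :=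
  mkMap F fun l => if l.head? = some x then wd F l.tail else 0

/-- `X*_R` (for the letter `x`): deletes the letter `x` from the end of a word. -/
def delR (x : Ltr) : FA F →ₗ[F] FA F :=
  mkMap F fun l => if l.getLast? = some x then wd F l.dropLast else 0

/-- `X_ℓ`: left q-shuffle multiplication by the letter `x`. -/
def shL (q : F) (x : Ltr) : FA F →ₗ[F] FA F := qshuf F q (wd F [x])

/-- `X_r`: right q-shuffle multiplication by the letter `x`. -/
def shR (q : F) (x : Ltr) : FA F →ₗ[F] FA F := (qshuf F q).flip (wd F [x])

/-- `X*_ℓ`: the weighted deletion map, deleting an occurrence of the letter `x`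
with weight `q^{⟨v₁,x⟩+⋯+⟨v_{i-1},x⟩}`. -/
def lowL (q : F) (x : Ltr) : FA F →ₗ[F] FA F :=
  mkMap F fun l =>
    ∑ i ∈ Finset.range l.length,
      if l[i]? = some x then
        (q ^ (((l.take i).map (fun y => brk y x)).sum)) • wd F (l.eraseIdx i)
      else 0

/-- `X*_r`: the weighted deletion map, deleting an occurrence of the letter `x`
with weight `q^{⟨vₙ,x⟩+⋯+⟨v_{i+1},x⟩}`. -/
def lowR (q : F) (x : Ltr) : FA F →ₗ[F] FA F :=
  mkMap F fun l =>
    ∑ i ∈ Finset.range l.length,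
      if l[i]? = some x then
        (q ^ (((l.drop (i + 1)).map (fun y => brk y x)).sum)) • wd F (l.eraseIdx i)
      else 0

/-- `K`, the algebra automorphism of the free algebra `V` with `K(A) = q²A`, `K(B) = q⁻²B`;
on a word `v = v₁⋯vₙ` it acts as `K(v) = v·q^{⟨v₁,A⟩+⋯+⟨vₙ,A⟩}`. -/
def Kop (q : F) : FA F →ₗ[F] FA F :=
  mkMap F fun l => (q ^ ((l.map (fun y => brk y lA)).sum)) • wd F l

/-- `K⁻¹`; on a word `v = v₁⋯vₙ` it acts as `K⁻¹(v) = v·q^{⟨v₁,B⟩+⋯+⟨vₙ,B⟩}`. -/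
def Kinv (q : F) : FA F →ₗ[F] FA F :=
  mkMap F fun l => (q ^ ((l.map (fun y => brk y lB)).sum)) • wd F l

/-- `T`, the automorphism of the free algebra swapping `A` and `B`. -/
def Top : FA F →ₗ[F] FA F :=
  mkMap F fun l => wd F (l.map (fun x => if x = lA then lB else lA))

/-- `Â = Q(A_L − K B_R)` and `B̂ = Q(B_L − K⁻¹ A_R)` where `Q = 1 - q²`. -/
def hatOp (q : F) (a : Ltr) : FA F →ₗ[F] FA F :=
  if a = lA then (1 - q ^ 2) • (AL F - Kop F q ∘ₗ BR F)
  else (1 - q ^ 2) • (BL F - Kinv F q ∘ₗ AR F)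

def phiW (q : F) : List Ltr → FA F
  | [] => 1
  | a :: t => hatOp F q a (phiW q t)

/-- The map `φ`: `φ(1) = 1` and `φ(v₁⋯vₙ) = v̂₁v̂₂⋯v̂ₙ(1)`. -/
def phi (q : F) : FA F →ₗ[F] FA F := mkMap F fun l => phiW F q l

/-- `ψ = K B_R A*_L + K⁻¹ A_R B*_L`. -/
def psi (q : F) : FA F →ₗ[F] FA F :=
  Kop F q ∘ₗ BR F ∘ₗ delL F lA + Kinv F q ∘ₗ AR F ∘ₗ delL F lB

/-- `V_n`, the span of the words of length `n`. -/
def Vn (n : ℕ) : Submodule F (FA F) :=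
  Submodule.span F { x | ∃ l : List Ltr, l.length = n ∧ x = wd F l }

/-- `J⁺ = A³B − [3]_q A²BA + [3]_q ABA² − BA³`. -/
def Jp (q : F) : FA F :=
  Agen F ^ 3 * Bgen F - tri F q • (Agen F ^ 2 * Bgen F * Agen F)
    + tri F q • (Agen F * Bgen F * Agen F ^ 2) - Bgen F * Agen F ^ 3

/-- `J⁻ = B³A − [3]_q B²AB + [3]_q BAB² − AB³`. -/
def Jm (q : F) : FA F :=
  Bgen F ^ 3 * Agen F - tri F q • (Bgen F ^ 2 * Agen F * Bgen F)
    + tri F q • (Bgen F * Agen F * Bgen F ^ 2) - Agen F * Bgen F ^ 3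

/-- `J`, the two-sided ideal of the free algebra generated by `J⁺` and `J⁻`
(realized as the `F`-span of the elements `a·J^±·b`). -/
def Jsub (q : F) : Submodule F (FA F) :=
  Submodule.span F { x | ∃ a b : FA F, x = a * Jp F q * b ∨ x = a * Jm F q * b }

/-- `U`, the subalgebra of the q-shuffle algebra `(V,⋆)` generated by `A` and `B`,
realized as the span of all `⋆`-products of the letters. -/
def Usub (q : F) : Submodule F (FA F) :=
  Submodule.span F (Set.range fun l : List Ltr => thetaW F q l)

/-- A `□_q`-module structure on an `F`-vector space `M`: four operators
`x₀, x₁, x₂, x₃` (indices mod 4) satisfying the q-Weyl and q-Serre relations. -/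
structure SqAct (q : F) (M : Type*) [AddCommGroup M] [Module F M] where
  x : ZMod 4 → Module.End F M
  weyl : ∀ i : ZMod 4,
    q • (x i * x (i + 1)) - q⁻¹ • (x (i + 1) * x i) = (q - q⁻¹) • (1 : Module.End F M)
  serre : ∀ i : ZMod 4,
    x i ^ 3 * x (i + 2) - tri F q • (x i ^ 2 * x (i + 2) * x i)
      + tri F q • (x i * x (i + 2) * x i ^ 2) - x (i + 2) * x i ^ 3 = 0

variable {F} {q : F} {M : Type*} [AddCommGroup M] [Module F M]

/-- A `□_q`-module `M` is generated by `ξ` if no proper submodule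
(subspace invariant under all the `xᵢ`) contains `ξ`. -/
def SqAct.Gen (S : SqAct F q M) (ξ : M) : Prop :=
  ∀ W : Submodule F M, (∀ i : ZMod 4, ∀ m ∈ W, S.x i m ∈ W) → ξ ∈ W → W = ⊤

/-- `W_n`: the span of the vectors `u₁u₂⋯uₙ·ξ` with each `uᵢ ∈ {x₀, x₂}`. -/
def SqAct.Wn (S : SqAct F q M) (ξ : M) (n : ℕ) : Submodule F M :=
  Submodule.span F
    { m | ∃ l : List (ZMod 4), l.length = n ∧ (∀ i ∈ l, i = 0 ∨ i = 2) ∧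
        m = l.foldr (fun i acc => S.x i acc) ξ }

end SqPaper

namespace SqPaper

section Helpers
variable (F : Type*) [Field F]

lemma mkMap_wd {M : Type*} [AddCommMonoid M] [Module F M] (f : List Ltr → M) (l : List Ltr) :
    mkMap F f (wd F l) = f l := by
  simp [mkMap, wd]

lemma wd_mul (l l' : List Ltr) : wd F l * wd F l' = wd F (l ++ l') := by
  simp [wd, MonoidAlgebra.single_mul_single, FreeMonoid.ofList_append]

def flipL (x : Ltr) : Ltr := if x = lA then lB else lA

lemma flipL_flipL (x : Ltr) : flipL (flipL x) = x := by
  fin_cases x <;> decide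

def rot : List Ltr → List Ltr
  | [] => []
  | x :: u => u ++ [flipL x]

lemma rot_length (l : List Ltr) : (rot l).length = l.length := by
  cases l <;> simp [rot]

lemma rot_iter_length (k : ℕ) (l : List Ltr) : (rot^[k] l).length = l.length := by
  induction k generalizing l with
  | zero => rfl
  | succ k ih => rw [Function.iterate_succ_apply, ih, rot_length]

lemma rot_iterate (l₁ l₂ : List Ltr) :
    rot^[l₁.length] (l₁ ++ l₂) = l₂ ++ l₁.map flipL := by
  induction l₁ generalizing l₂ with
  | nil => simp
  | cons x u ih =>
      have : rot ((x :: u) ++ l₂) = u ++ (l₂ ++ [flipL x]) := by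
        simp [rot]
      rw [List.length_cons, Function.iterate_succ_apply, this, ih (l₂ ++ [flipL x])]
      simp

lemma rot_iterate_two (l : List Ltr) : rot^[2 * l.length] l = l := by
  have h1 : rot^[l.length] l = l.map flipL := by
    simpa using rot_iterate l []
  have h2 : rot^[l.length] (l.map flipL) = l := by
    have := rot_iterate (l.map flipL) []
    simp only [List.length_map, List.map_map] at this
    rw [List.append_nil] at this
    rw [this]
    simp [Function.comp_def, flipL_flipL]
  rw [two_mul, Function.iterate_add_apply, h1, h2]

def sA (l : List Ltr) : ℤ := (l.map (fun y => brk y lA)).sum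

lemma brk_B (a : Ltr) : brk a lB = - brk a lA := by fin_cases a <;> decide

lemma sB_eq (u : List Ltr) : (u.map (fun y => brk y lB)).sum = - sA u := by
  induction u with
  | nil => simp [sA]
  | cons a t ih => simp [sA, List.map_cons, List.sum_cons, brk_B a] at *; omega

end Helpers

section Main
variable {F : Type*} [Field F]

lemma step_mem (q : F) (n : ℕ) (x : Ltr) (u : List Ltr) (hu : u.length = n) :
    wd F (x :: u) - (q ^ (((u ++ [flipL x]).map fun y => brk y x).sum)) • wd F (u ++ [flipL x]) ∈
      Submodule.map (AL F - Kop F q ∘ₗ BR F) (Vn F n) ⊔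
        Submodule.map (BL F - Kinv F q ∘ₗ AR F) (Vn F n) := by
  have hu' : wd F u ∈ Vn F n := Submodule.subset_span ⟨u, hu, rfl⟩
  have hx : x = lA ∨ x = lB := by fin_cases x <;> simp [lA, lB]
  rcases hx with rfl | rfl
  · apply Submodule.mem_sup_left
    refine ⟨wd F u, hu', ?_⟩
    have hf : flipL lA = lB := rfl
    simp only [LinearMap.sub_apply, LinearMap.comp_apply, AL, BR,
      LinearMap.mulLeft_apply, LinearMap.mulRight_apply, Agen, Bgen,
      wd_mul, Kop, mkMap_wd, hf]
    rfl
  · apply Submodule.mem_sup_right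
    refine ⟨wd F u, hu', ?_⟩
    have hf : flipL lB = lA := rfl
    simp only [LinearMap.sub_apply, LinearMap.comp_apply, BL, AR,
      LinearMap.mulLeft_apply, LinearMap.mulRight_apply, Agen, Bgen,
      wd_mul, Kinv, mkMap_wd, hf]
    rfl

lemma step_exp (x : Ltr) (u : List Ltr) :
    8 * ((u ++ [flipL x]).map fun y => brk y x).sum
      = sA (x :: u) ^ 2 - sA (u ++ [flipL x]) ^ 2 - 16 := by
  have b1 : brk lA lA = 2 := by decide
  have b2 : brk lB lA = -2 := by decide
  have b3 : brk lA lB = -2 := by decide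
  have hsapp : ∀ y : Ltr, sA (u ++ [y]) = sA u + brk y lA := by
    intro y; simp [sA]
  have hscons : sA (x :: u) = brk x lA + sA u := by simp [sA]
  have hx : x = lA ∨ x = lB := by fin_cases x <;> simp [lA, lB]
  rcases hx with rfl | rfl
  · have hf : flipL lA = lB := rfl
    rw [hf, hsapp, hscons, b1, b2]
    have : ((u ++ [lB]).map fun y => brk y lA).sum = sA u + -2 := by
      simp [sA, b2]
    rw [this]; ring
  · have hf : flipL lB = lA := rfl
    rw [hf, hsapp, hscons, b1, b2]
    have : ((u ++ [lA]).map fun y => brk y lB).sum = -sA u + -2 := by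
      simp only [List.map_append, List.sum_append, sB_eq]
      simp [sA, b1]
    rw [this]; ring

lemma iter_mem (q : F) (hq : q ≠ 0) (n : ℕ) (l : List Ltr) (hl : l.length = n + 1) (k : ℕ) :
    ∃ E : ℤ, 8 * E = sA l ^ 2 - sA (rot^[k] l) ^ 2 - 16 * k ∧
      wd F l - q ^ E • wd F (rot^[k] l) ∈
        Submodule.map (AL F - Kop F q ∘ₗ BR F) (Vn F n) ⊔
          Submodule.map (BL F - Kinv F q ∘ₗ AR F) (Vn F n) := by
  induction k with
  | zero => exact ⟨0, by simp, by simp⟩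
  | succ k ih =>
    obtain ⟨E, h8, hm⟩ := ih
    have hlen : (rot^[k] l).length = n + 1 := by rw [rot_iter_length, hl]
    obtain ⟨x, u, hxu⟩ : ∃ x u, rot^[k] l = x :: u := by
      cases h : rot^[k] l with
      | nil => rw [h] at hlen; simp at hlen
      | cons a t => exact ⟨a, t, rfl⟩
    have hu : u.length = n := by rw [hxu] at hlen; simpa using hlen
    have hstep := step_mem q n x u hu
    set e : ℤ := ((u ++ [flipL x]).map fun y => brk y x).sum with he
    have hrotk : rot^[k+1] l = u ++ [flipL x] := by
      rw [Function.iterate_succ_apply', hxu]; rfl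
    refine ⟨E + e, ?_, ?_⟩
    · have hse := step_exp x u
      rw [hrotk]
      rw [hxu] at h8
      push_cast at h8 ⊢
      linarith
    · have hkey : wd F l - q ^ (E + e) • wd F (u ++ [flipL x]) =
          (wd F l - q ^ E • wd F (x :: u)) +
            q ^ E • (wd F (x :: u) - q ^ e • wd F (u ++ [flipL x])) := by
        rw [smul_sub, smul_smul, ← zpow_add₀ hq]
        abel
      rw [hrotk, hkey]
      rw [hxu] at hm
      exact add_mem hm (Submodule.smul_mem _ _ hstep)

end Main
end SqPaper

open SqPaper in
/-- for `n ≥ 1`, `V_n = (A_L − K B_R)(V_{n−1}) + (B_L − K⁻¹ A_R)(V_{n−1})`. -/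
theorem Vn_decomposition (F : Type*) [Field F] (q : F) (hq : q ≠ 0)
    (hq1 : ∀ k : ℕ, 0 < k → q ^ k ≠ 1) :
    ∀ n : ℕ, 1 ≤ n →
      Vn F n = Submodule.map (AL F - Kop F q ∘ₗ BR F) (Vn F (n - 1))
        ⊔ Submodule.map (BL F - Kinv F q ∘ₗ AR F) (Vn F (n - 1))  := by
  intro n hn
  obtain ⟨m, rfl⟩ : ∃ m, n = m + 1 := ⟨n - 1, (Nat.succ_pred_eq_of_pos hn).symm⟩
  rw [show m + 1 - 1 = m from rfl]
  apply le_antisymm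
  · rw [Vn, Submodule.span_le]
    rintro _ ⟨l, hl, rfl⟩
    obtain ⟨E, h8, hmem⟩ := iter_mem q hq m l hl (2 * (m + 1))
    rw [show rot^[2 * (m + 1)] l = l from by rw [← hl]; exact rot_iterate_two l] at h8 hmem
    have hE : E = -(4 * ((m : ℤ) + 1)) := by push_cast at h8; linarith
    rw [hE] at hmem
    have h1 : (1 - q ^ (-(4 * ((m : ℤ) + 1)))) • wd F l ∈
        Submodule.map (AL F - Kop F q ∘ₗ BR F) (Vn F m) ⊔
          Submodule.map (BL F - Kinv F q ∘ₗ AR F) (Vn F m) := by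
      rwa [sub_smul, one_smul]
    have hne : (1 : F) - q ^ (-(4 * ((m : ℤ) + 1))) ≠ 0 := by
      have hpow : q ^ (4 * (m + 1)) ≠ 1 := hq1 _ (by positivity)
      rw [sub_ne_zero]
      intro h
      apply hpow
      have h2 : q ^ (4 * ((m : ℤ) + 1)) = 1 := by
        rw [← inv_eq_one, ← zpow_neg]; exact h.symm
      rwa [show (4 * ((m : ℤ) + 1)) = ((4 * (m + 1) : ℕ) : ℤ) from by push_cast; ring,
        zpow_natCast] at h2
    have h2 := Submodule.smul_mem _ (1 - q ^ (-(4 * ((m : ℤ) + 1))))⁻¹ h1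
    rwa [smul_smul, inv_mul_cancel₀ hne, one_smul] at h2
  · apply sup_le
    · rw [Submodule.map_le_iff_le_comap, Vn, Submodule.span_le]
      rintro _ ⟨u, hu, rfl⟩
      simp only [SetLike.mem_coe, Submodule.mem_comap]
      have hcomp : (AL F - Kop F q ∘ₗ BR F) (wd F u) =
          wd F (lA :: u) - (q ^ (((u ++ [lB]).map fun y => brk y lA).sum)) • wd F (u ++ [lB]) := by
        simp only [LinearMap.sub_apply, LinearMap.comp_apply, AL, BR,
          LinearMap.mulLeft_apply, LinearMap.mulRight_apply, Agen, Bgen, wd_mul, Kop, mkMap_wd]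
        rfl
      rw [hcomp]
      exact sub_mem (Submodule.subset_span ⟨lA :: u, by simp [hu], rfl⟩)
        (Submodule.smul_mem _ _ (Submodule.subset_span ⟨u ++ [lB], by simp [hu], rfl⟩))
    · rw [Submodule.map_le_iff_le_comap, Vn, Submodule.span_le]
      rintro _ ⟨u, hu, rfl⟩
      simp only [SetLike.mem_coe, Submodule.mem_comap]
      have hcomp : (BL F - Kinv F q ∘ₗ AR F) (wd F u) =
          wd F (lB :: u) - (q ^ (((u ++ [lA]).map fun y => brk y lB).sum)) • wd F (u ++ [lA]) := by
        simp only [LinearMap.sub_apply, LinearMap.comp_apply, BL, AR,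
          LinearMap.mulLeft_apply, LinearMap.mulRight_apply, Agen, Bgen, wd_mul, Kinv, mkMap_wd]
        rfl
      rw [hcomp]
      exact sub_mem (Submodule.subset_span ⟨lB :: u, by simp [hu], rfl⟩)
        (Submodule.smul_mem _ _ (Submodule.subset_span ⟨u ++ [lA], by simp [hu], rfl⟩))
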